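/- Let Φ : ℝ → ℝ be continuous, let a < b with Φ(u) ≠ 0 for all u ∈ (a, b), and suppose there exists a differentiable function u : ℝ → ℝ with u′(ζ) = Φ(u(ζ)) for all ζ, u(0) ∈ (a, b), lim_{ζ→−∞} u(ζ) = a and lim_{ζ→+∞} u(ζ) = b. Then Φ(w) > 0 for all w ∈ (a, b). Symmetrically, if instead lim_{ζ→−∞} u(ζ) = b and lim_{ζ→+∞} u(ζ) = a, then Φ(w) < 0 for all w ∈ (a, b). -/

import Mathlib

open Filter

lemma core_no_cross (Φ : ℝ → ℝ) (u : ℝ → ℝ)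
    (hu : ∀ ζ : ℝ, HasDerivAt u (Φ (u ζ)) ζ)
    (c b : ℝ) (h0 : u 0 < c) (hcb : c < b)
    (htop : Tendsto u atTop (nhds b)) (hc : Φ c < 0) : False := by
  have ucont : Continuous u :=
    continuous_iff_continuousAt.mpr fun ζ => (hu ζ).continuousAt
  -- find ζ1 > 0 with c < u ζ1
  obtain ⟨ζ1, hζ1pos, hζ1⟩ : ∃ ζ1 : ℝ, 0 ≤ ζ1 ∧ c < u ζ1 := by
    have h1 : ∀ᶠ ζ in atTop, c < u ζ := htop.eventually (eventually_gt_nhds hcb)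
    obtain ⟨ζ1, hζ1⟩ := (h1.and (eventually_ge_atTop (0:ℝ))).exists
    exact ⟨ζ1, hζ1.2, hζ1.1⟩
  -- the crossing set
  set S : Set ℝ := Set.Icc 0 ζ1 ∩ u ⁻¹' {c} with hS
  have hScl : IsClosed S := isClosed_Icc.inter (isClosed_singleton.preimage ucont)
  have hScomp : IsCompact S := isCompact_Icc.inter_right (isClosed_singleton.preimage ucont)
  have hSne : S.Nonempty := by
    have : c ∈ Set.Icc (u 0) (u ζ1) := ⟨h0.le, hζ1.le⟩
    obtain ⟨x, hx, hxc⟩ := intermediate_value_Icc hζ1pos ucont.continuousOn this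
    exact ⟨x, hx, hxc⟩
  set t : ℝ := sInf S with ht
  have htS : t ∈ S := hScomp.sInf_mem hSne
  have htc : u t = c := htS.2
  have htpos : 0 < t := by
    rcases lt_or_eq_of_le htS.1.1 with h | h
    · exact h
    · exact absurd htc (by rw [← h]; exact h0.ne)
  -- on [0, t), u < c
  have hbelow : ∀ ζ ∈ Set.Ico (0:ℝ) t, u ζ < c := by
    intro ζ hζ
    by_contra hge
    push_neg at hge
    rcases eq_or_lt_of_le hge with h | h
    · have : ζ ∈ S := ⟨⟨hζ.1, hζ.2.le.trans htS.1.2⟩, h.symm⟩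
      exact absurd (csInf_le hScomp.bddBelow this) (not_le.mpr hζ.2)
    · obtain ⟨x, hx, hxc⟩ := intermediate_value_Icc hζ.1 ucont.continuousOn ⟨h0.le, h.le⟩
      have hxS : x ∈ S := ⟨⟨hx.1, (hx.2.trans hζ.2.le).trans htS.1.2⟩, hxc⟩
      exact absurd (csInf_le hScomp.bddBelow hxS) (not_le.mpr (lt_of_le_of_lt hx.2 hζ.2))
  -- derivative at t is a limit of nonnegative slopes from the left
  have hslope : Tendsto (slope u t) (nhdsWithin t (Set.Iio t)) (nhds (Φ c)) := by
    have := hasDerivAt_iff_tendsto_slope.mp (hu t)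
    rw [htc] at this
    exact this.mono_left (nhdsWithin_mono _ fun x hx => (ne_of_lt hx))
  have hnonneg : ∀ᶠ ζ in nhdsWithin t (Set.Iio t), (0:ℝ) ≤ slope u t ζ := by
    filter_upwards [Ioo_mem_nhdsLT htpos] with ζ hζ
    have h1 : u ζ - u t < 0 := by
      have := hbelow ζ ⟨hζ.1.le, hζ.2⟩
      rw [htc]; linarith
    have h2 : ζ - t < 0 := sub_neg.mpr hζ.2
    have : 0 < (u ζ - u t) / (ζ - t) := div_pos_of_neg_of_neg h1 h2
    simpa [slope_def_field] using this.le
  have := ge_of_tendsto hslope hnonneg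
  linarith

lemma sign_dichotomy (Φ : ℝ → ℝ) (hΦ : Continuous Φ) (a b : ℝ)
    (hne : ∀ u ∈ Set.Ioo a b, Φ u ≠ 0) :
    (∀ w ∈ Set.Ioo a b, 0 < Φ w) ∨ (∀ w ∈ Set.Ioo a b, Φ w < 0) := by
  by_contra h
  push_neg at h
  obtain ⟨⟨w1, hw1, hw1le⟩, ⟨w2, hw2, hw2ge⟩⟩ := h
  have hw1neg : Φ w1 < 0 := lt_of_le_of_ne hw1le (hne w1 hw1)
  have hw2pos : 0 < Φ w2 := lt_of_le_of_ne hw2ge (Ne.symm (hne w2 hw2))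
  have hsub : Set.uIcc w1 w2 ⊆ Set.Ioo a b :=
    (Set.ordConnected_Ioo).uIcc_subset hw1 hw2
  have h0 : (0:ℝ) ∈ Set.uIcc (Φ w1) (Φ w2) :=
    Set.mem_uIcc.mpr (Or.inl ⟨hw1neg.le, hw2pos.le⟩)
  obtain ⟨x, hx, hxz⟩ := intermediate_value_uIcc (f := Φ) hΦ.continuousOn h0
  exact hne x (hsub hx) hxz

/-- Converse ODE step: existence of a heteroclinic orbit of `u̇ = Φ(u)` connecting `a`
and `b` determines the sign of `Φ` on `(a,b)`: positive if the orbit runs from `a` to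
`b`, negative if it runs from `b` to `a`. -/
theorem sign_from_heteroclinic (Φ : ℝ → ℝ) (hΦ : Continuous Φ)
    (a b : ℝ) (hab : a < b) (hne : ∀ u ∈ Set.Ioo a b, Φ u ≠ 0) :
    ((∃ u : ℝ → ℝ,
        (∀ ζ : ℝ, HasDerivAt u (Φ (u ζ)) ζ) ∧
        u 0 ∈ Set.Ioo a b ∧
        Tendsto u atBot (nhds a) ∧ Tendsto u atTop (nhds b)) →
      ∀ w ∈ Set.Ioo a b, 0 < Φ w) ∧
    ((∃ u : ℝ → ℝ,
        (∀ ζ : ℝ, HasDerivAt u (Φ (u ζ)) ζ) ∧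
        u 0 ∈ Set.Ioo a b ∧
        Tendsto u atBot (nhds b) ∧ Tendsto u atTop (nhds a)) →
      ∀ w ∈ Set.Ioo a b, Φ w < 0) := by
  constructor
  · rintro ⟨u, hu, h0, hbot, htop⟩
    rcases sign_dichotomy Φ hΦ a b hne with hpos | hneg
    · exact hpos
    · exfalso
      set c := (u 0 + b) / 2 with hcdef
      have hc1 : u 0 < c := by have := h0.2; simp only [hcdef]; linarith
      have hc2 : c < b := by have := h0.2; simp only [hcdef]; linarith
      have hcI : c ∈ Set.Ioo a b := ⟨lt_trans h0.1 hc1, hc2⟩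
      exact core_no_cross Φ u hu c b hc1 hc2 htop (hneg c hcI)
  · rintro ⟨u, hu, h0, hbot, htop⟩
    rcases sign_dichotomy Φ hΦ a b hne with hpos | hneg
    · exfalso
      set c := (u 0 + a) / 2 with hcdef
      have hc1 : a < c := by have := h0.1; simp only [hcdef]; linarith
      have hc2 : c < u 0 := by have := h0.1; simp only [hcdef]; linarith
      have hcI : c ∈ Set.Ioo a b := ⟨hc1, lt_trans hc2 h0.2⟩
      -- reflect: v = -u solves v' = Ψ(v) with Ψ x = -Φ(-x)
      have hv : ∀ ζ : ℝ, HasDerivAt (fun ζ => -u ζ) ((fun x => -Φ (-x)) (-u ζ)) ζ := by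
        intro ζ
        exact (hu ζ).neg.congr_deriv (by simp)
      have hvtop : Tendsto (fun ζ => -u ζ) atTop (nhds (-a)) := htop.neg
      exact core_no_cross (fun x => -Φ (-x)) (fun ζ => -u ζ) hv (-c) (-a)
        (by simpa using hc2) (by simpa using hc1) hvtop
        (by simpa using hpos c hcI)
    · exact hneg
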